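/- The variance-inflated confidence interval is asymptotically conservative: if √n(Î − I*) ⇒ N(0, σ²) when I* > 0 and n·ŜE² → σ² in probability, then the interval [Î ± z_{1−α/2}·ŜE_τ] with ŜE_τ² = ŜE² + τ/n (τ > 0) has asymptotic coverage at least 1−α; in the degenerate case I* = 0 with Î − I* = o_p(n^{-1/2}), the inflated interval has asymptotic coverage tending to 1. -/

import Mathlib

open MeasureTheory ProbabilityTheory Filter

lemma aux_meas_event {Ω : Type*} [MeasurableSpace Ω] (Istar : ℝ) (In SEn : Ω → ℝ)
    (hI : Measurable In) (hSE : Measurable SEn) (z b : ℝ) :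
    MeasurableSet {ω | |In ω - Istar| ≤ z * Real.sqrt (SEn ω ^ 2 + b)} := by
  apply measurableSet_le
  · exact ((hI.sub_const _).abs)
  · exact (Real.continuous_sqrt.measurable.comp ((hSE.pow_const 2).add_const _)).const_mul z

/-- The variance-inflated confidence interval is asymptotically conservative.
Case 1: if `I* > 0`, `√n(Î_n − I*) ⇒ N(0, σ²)` (weak convergence expressed by testing
against bounded continuous functions) and `n ŜE_n² → σ²` in probability, then the
interval `[Î_n ± z_{1−α/2} √(ŜE_n² + τ/n)]` has asymptotic coverage at least `1 − α`.
Case 2: if `I* = 0` and `√n(Î_n − I*) → 0` in probability, the coverage tends to `1`. -/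
theorem stmt_18 {Ω : Type*} [MeasurableSpace Ω]
    (P : Measure Ω) [IsProbabilityMeasure P]
    (Istar : ℝ) (I SE : ℕ → Ω → ℝ)
    (hImeas : ∀ n, Measurable (I n)) (hSEmeas : ∀ n, Measurable (SE n))
    (hSEnonneg : ∀ n ω, 0 ≤ SE n ω)
    (τ α : ℝ) (hτ : 0 < τ) (hα : α ∈ Set.Ioo (0 : ℝ) 1)
    (z : ℝ) (hz : (gaussianReal 0 1) (Set.Icc (-z) z) = ENNReal.ofReal (1 - α)) :
    ((0 < Istar → ∀ σ : NNReal, 0 < σ →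
        (∀ g : BoundedContinuousFunction ℝ ℝ,
          Tendsto (fun n : ℕ => ∫ ω, g (Real.sqrt n * (I n ω - Istar)) ∂P) atTop
            (nhds (∫ x, g x ∂(gaussianReal 0 (σ ^ 2))))) →
        (∀ δ : ℝ, 0 < δ →
          Tendsto (fun n : ℕ =>
            P {ω | δ < |(n : ℝ) * SE n ω ^ 2 - (σ : ℝ) ^ 2|}) atTop (nhds 0)) →
        (1 - α : ℝ) ≤ atTop.liminf (fun n : ℕ =>
          (P {ω | |I n ω - Istar| ≤ z * Real.sqrt (SE n ω ^ 2 + τ / n)}).toReal))) ∧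
      (Istar = 0 →
        (∀ δ : ℝ, 0 < δ →
          Tendsto (fun n : ℕ =>
            P {ω | δ < Real.sqrt n * |I n ω - Istar|}) atTop (nhds 0)) →
        Tendsto (fun n : ℕ =>
          (P {ω | |I n ω - Istar| ≤ z * Real.sqrt (SE n ω ^ 2 + τ / n)}).toReal)
          atTop (nhds 1)) := by
  obtain ⟨hα0, hα1⟩ := hα
  have h1α : (0:ℝ) < 1 - α := by linarith
  -- z is positive
  have hz0 : 0 < z := by
    by_contra h
    push_neg at h
    have h0 : (gaussianReal 0 1) (Set.Icc (-z) z) = 0 := by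
      rcases lt_or_eq_of_le h with h' | h'
      · rw [Set.Icc_eq_empty (by linarith)]
        simp
      · subst h'
        have : Set.Icc (-(0:ℝ)) 0 = {(0:ℝ)} := by simp
        rw [this]
        have hAC := gaussianReal_absolutelyContinuous (0:ℝ) (v := 1) (by norm_num)
        exact hAC (by simp)
    rw [h0] at hz
    exact absurd hz.symm (ENNReal.ofReal_pos.mpr h1α).ne'
  -- measurability of the events
  have hEmeas : ∀ n : ℕ, MeasurableSet
      {ω | |I n ω - Istar| ≤ z * Real.sqrt (SE n ω ^ 2 + τ / n)} :=
    fun n => aux_meas_event Istar (I n) (SE n) (hImeas n) (hSEmeas n) z _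
  constructor
  · -- Case 1
    intro _ σ hσ hW hS
    have hσ0 : (0:ℝ) < σ := hσ
    set c : ℝ := Real.sqrt ((σ:ℝ)^2 + τ/2) with hc_def
    have hc2 : c^2 = (σ:ℝ)^2 + τ/2 := Real.sq_sqrt (by positivity)
    have hσc : (σ:ℝ) < c := by
      nlinarith [Real.sqrt_nonneg ((σ:ℝ)^2 + τ/2)]
    have hc0 : 0 < c := lt_trans hσ0 hσc
    -- probability measures
    have hXmeas : ∀ n : ℕ, Measurable (fun ω => Real.sqrt n * (I n ω - Istar)) :=
      fun n => ((hImeas n).sub_const _).const_mul _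
    let μn : ℕ → ProbabilityMeasure ℝ := fun n =>
      ⟨P.map (fun ω => Real.sqrt n * (I n ω - Istar)),
        Measure.isProbabilityMeasure_map (hXmeas n).aemeasurable⟩
    let ν : ProbabilityMeasure ℝ := ⟨gaussianReal 0 (σ ^ 2), inferInstance⟩
    have hWconv : Tendsto μn atTop (nhds ν) := by
      rw [ProbabilityMeasure.tendsto_iff_forall_integral_tendsto]
      intro f
      have : ∀ n : ℕ, ∫ x, f x ∂(μn n : Measure ℝ)
          = ∫ ω, f (Real.sqrt n * (I n ω - Istar)) ∂P := fun n =>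
        integral_map (hXmeas n).aemeasurable f.continuous.aestronglyMeasurable
      simp_rw [this]
      exact hW f
    -- portmanteau
    have hU : IsOpen (Set.Ioo (-(z*c)) (z*c)) := isOpen_Ioo
    have hport := ProbabilityMeasure.le_liminf_measure_open_of_tendsto hWconv hU
    -- gaussian lower bound on the open interval
    have hgauss : ENNReal.ofReal (1 - α) ≤ (ν : Measure ℝ) (Set.Ioo (-(z*c)) (z*c)) := by
      have hmap : (gaussianReal 0 1).map (fun x => (σ:ℝ) * x) = gaussianReal 0 (σ ^ 2) := by
        have := gaussianReal_map_const_mul (μ := 0) (v := 1) ((σ:ℝ))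
        rw [this]
        congr 1
        · ring
        · ext
          simp
      have hpre : Set.Icc (-z) z ⊆ (fun x => (σ:ℝ) * x) ⁻¹' Set.Ioo (-(z*c)) (z*c) := by
        intro x hx
        simp only [Set.mem_preimage, Set.mem_Ioo]
        simp only [Set.mem_Icc] at hx
        constructor
        · nlinarith
        · nlinarith
      have h1 : (ν : Measure ℝ) (Set.Ioo (-(z*c)) (z*c))
          = (gaussianReal 0 1) ((fun x => (σ:ℝ) * x) ⁻¹' Set.Ioo (-(z*c)) (z*c)) := by
        show (gaussianReal 0 (σ ^ 2)) _ = _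
        rw [← hmap, Measure.map_apply (measurable_const_mul _) measurableSet_Ioo]
      rw [h1, ← hz]
      exact measure_mono hpre
    have hLlow : ENNReal.ofReal (1 - α)
        ≤ atTop.liminf (fun n => (μn n : Measure ℝ) (Set.Ioo (-(z*c)) (z*c))) :=
      le_trans hgauss hport
    -- identify (μn n) U with P of the event A n
    have hA : ∀ n : ℕ, (μn n : Measure ℝ) (Set.Ioo (-(z*c)) (z*c))
        = P {ω | |Real.sqrt n * (I n ω - Istar)| < z * c} := by
      intro n
      show P.map _ _ = _
      rw [Measure.map_apply (hXmeas n) measurableSet_Ioo]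
      congr 1
      ext ω
      simp [Set.mem_Ioo, abs_lt, and_comm, -abs_mul]
    -- the sequence of coverage probabilities is bounded above by 1
    have hbdd : IsBoundedUnder (· ≤ ·) atTop (fun n : ℕ =>
        (P {ω | |I n ω - Istar| ≤ z * Real.sqrt (SE n ω ^ 2 + τ / n)}).toReal) := by
      refine isBoundedUnder_of ⟨1, fun n => ?_⟩
      exact ENNReal.toReal_le_of_le_ofReal zero_le_one (by simpa using prob_le_one)
    have hcob := hbdd.isCoboundedUnder_ge
    -- main bound: for every ε > 0
    refine le_of_forall_pos_le_add ?_
    intro ε hε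
    rcases le_or_gt (1 - α - ε) 0 with hle | hpos
    · -- trivial case: liminf is nonnegative
      have h0 : (0:ℝ) ≤ atTop.liminf (fun n : ℕ =>
          (P {ω | |I n ω - Istar| ≤ z * Real.sqrt (SE n ω ^ 2 + τ / n)}).toReal) :=
        le_liminf_of_le hcob (Eventually.of_forall fun n => ENNReal.toReal_nonneg)
      linarith
    · have key : ∀ᶠ n : ℕ in atTop, 1 - α - ε ≤
          (P {ω | |I n ω - Istar| ≤ z * Real.sqrt (SE n ω ^ 2 + τ / n)}).toReal := by
        -- eventually the weak-convergence part exceeds ofReal (1-α-ε/2)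
        have hlt : ENNReal.ofReal (1 - α - ε/2)
            < atTop.liminf (fun n => (μn n : Measure ℝ) (Set.Ioo (-(z*c)) (z*c))) := by
          refine lt_of_lt_of_le ?_ hLlow
          exact ENNReal.ofReal_lt_ofReal_iff h1α |>.mpr (by linarith)
        have hev1 := eventually_lt_of_lt_liminf hlt
        -- eventually the variance part is small
        have hS' := hS (τ/2) (by linarith)
        have hev2 : ∀ᶠ n : ℕ in atTop,
            P {ω | τ/2 < |(n : ℝ) * SE n ω ^ 2 - (σ : ℝ) ^ 2|} < ENNReal.ofReal (ε/2) :=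
          hS'.eventually_lt_const (ENNReal.ofReal_pos.mpr (by linarith))
        filter_upwards [hev1, hev2, eventually_ge_atTop 1] with n h1 h2 hn1
        -- set up notation
        set E := {ω | |I n ω - Istar| ≤ z * Real.sqrt (SE n ω ^ 2 + τ / n)} with hE
        set A := {ω | |Real.sqrt n * (I n ω - Istar)| < z * c} with hAdef
        set Bc := {ω | τ/2 < |(n : ℝ) * SE n ω ^ 2 - (σ : ℝ) ^ 2|} with hBc
        have hn0 : (0:ℝ) < n := by exact_mod_cast hn1
        -- inclusion A ⊆ E ∪ Bc
        have hincl : A ⊆ E ∪ Bc := by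
          intro ω hω
          by_cases hB : ω ∈ Bc
          · exact Or.inr hB
          · left
            simp only [hBc, Set.mem_setOf_eq, not_lt] at hB
            simp only [hAdef, Set.mem_setOf_eq] at hω
            simp only [hE, Set.mem_setOf_eq]
            -- from ¬Bc : c² ≤ n SE² + τ
            have hB2 : c^2 ≤ (n:ℝ) * SE n ω ^ 2 + τ := by
              rw [hc2]
              rcases abs_le.mp hB with ⟨hB1, _⟩
              linarith
            have hsq : c ≤ Real.sqrt ((n:ℝ) * SE n ω ^ 2 + τ) := by
              have := Real.sqrt_le_sqrt hB2
              rwa [Real.sqrt_sq hc0.le] at this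
            have hfact : (n:ℝ) * SE n ω ^ 2 + τ = (n:ℝ) * (SE n ω ^ 2 + τ / n) := by
              field_simp
            have hsqrt_split : Real.sqrt ((n:ℝ) * SE n ω ^ 2 + τ)
                = Real.sqrt n * Real.sqrt (SE n ω ^ 2 + τ / n) := by
              rw [hfact, Real.sqrt_mul (le_of_lt hn0)]
            have habs : |Real.sqrt n * (I n ω - Istar)|
                = Real.sqrt n * |I n ω - Istar| := by
              rw [abs_mul, abs_of_nonneg (Real.sqrt_nonneg _)]
            have hchain : Real.sqrt n * |I n ω - Istar|
                ≤ z * (Real.sqrt n * Real.sqrt (SE n ω ^ 2 + τ / n)) := by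
              rw [← habs, ← hsqrt_split]
              calc |Real.sqrt n * (I n ω - Istar)| ≤ z * c := le_of_lt hω
              _ ≤ z * Real.sqrt ((n:ℝ) * SE n ω ^ 2 + τ) :=
                mul_le_mul_of_nonneg_left hsq hz0.le
            have hsn : (0:ℝ) < Real.sqrt n := Real.sqrt_pos.mpr hn0
            have : Real.sqrt n * |I n ω - Istar|
                ≤ Real.sqrt n * (z * Real.sqrt (SE n ω ^ 2 + τ / n)) := by
              calc Real.sqrt n * |I n ω - Istar|
                  ≤ z * (Real.sqrt n * Real.sqrt (SE n ω ^ 2 + τ / n)) := hchain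
                _ = Real.sqrt n * (z * Real.sqrt (SE n ω ^ 2 + τ / n)) := by ring
            exact le_of_mul_le_mul_left this hsn
        -- measure arithmetic
        have hmeasA : P A ≤ P E + P Bc := le_trans (measure_mono hincl) (measure_union_le _ _)
        have hPAlt : ENNReal.ofReal (1 - α - ε/2) < P A := by
          rw [← hA n]; exact h1
        have hcomb : ENNReal.ofReal (1 - α - ε/2) < P E + ENNReal.ofReal (ε/2) :=
          lt_of_lt_of_le hPAlt (le_trans hmeasA (add_le_add_right h2.le _))
        have hfin : P E ≠ ⊤ := measure_ne_top _ _
        have := (ENNReal.ofReal_lt_iff_lt_toReal (by linarith) (by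
          exact ENNReal.add_ne_top.mpr ⟨hfin, ENNReal.ofReal_ne_top⟩)).mp hcomb
        rw [ENNReal.toReal_add hfin ENNReal.ofReal_ne_top,
          ENNReal.toReal_ofReal (by linarith)] at this
        linarith
      have := le_liminf_of_le hcob key
      linarith
  · -- Case 2
    intro hI0 hp
    have hzτ : 0 < z * Real.sqrt τ := mul_pos hz0 (Real.sqrt_pos.mpr hτ)
    have hp' := hp (z * Real.sqrt τ) hzτ
    -- complements tend to zero
    have hcompl : Tendsto (fun n : ℕ =>
        P {ω | |I n ω - Istar| ≤ z * Real.sqrt (SE n ω ^ 2 + τ / n)}ᶜ) atTop (nhds 0) := by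
      have hle : ∀ᶠ n : ℕ in atTop,
          P {ω | |I n ω - Istar| ≤ z * Real.sqrt (SE n ω ^ 2 + τ / n)}ᶜ
            ≤ P {ω | z * Real.sqrt τ < Real.sqrt n * |I n ω - Istar|} := by
        filter_upwards [eventually_ge_atTop 1] with n hn1
        apply measure_mono
        intro ω hω
        simp only [Set.mem_compl_iff, Set.mem_setOf_eq, not_le] at hω
        simp only [Set.mem_setOf_eq]
        have hn0 : (0:ℝ) < n := by exact_mod_cast hn1
        have hsn : (0:ℝ) < Real.sqrt n := Real.sqrt_pos.mpr hn0
        have hτn : Real.sqrt (τ / n) ≤ Real.sqrt (SE n ω ^ 2 + τ / n) :=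
          Real.sqrt_le_sqrt (by nlinarith [sq_nonneg (SE n ω)])
        have h1 : z * Real.sqrt (τ / n) < |I n ω - Istar| :=
          lt_of_le_of_lt (mul_le_mul_of_nonneg_left hτn hz0.le) hω
        have h2 : Real.sqrt (τ / n) = Real.sqrt τ / Real.sqrt n := Real.sqrt_div hτ.le n
        rw [h2] at h1
        have heqq : Real.sqrt n * (z * (Real.sqrt τ / Real.sqrt n)) = z * Real.sqrt τ := by
          rw [mul_comm, mul_assoc, div_mul_cancel₀ _ hsn.ne']
        calc z * Real.sqrt τ = Real.sqrt n * (z * (Real.sqrt τ / Real.sqrt n)) := heqq.symm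
          _ < Real.sqrt n * |I n ω - Istar| := by
              apply mul_lt_mul_of_pos_left _ hsn
              exact h1
      exact tendsto_of_tendsto_of_tendsto_of_le_of_le'
        tendsto_const_nhds hp' (Eventually.of_forall fun n => zero_le) hle
    -- convert to toReal and use P E = 1 - P Eᶜ
    have hcomplR : Tendsto (fun n : ℕ =>
        (P {ω | |I n ω - Istar| ≤ z * Real.sqrt (SE n ω ^ 2 + τ / n)}ᶜ).toReal)
        atTop (nhds 0) := by
      have := (ENNReal.tendsto_toReal (by simp : (0:ENNReal) ≠ ⊤)).comp hcompl
      simpa [Function.comp_def] using this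
    have heq : ∀ n : ℕ,
        (P {ω | |I n ω - Istar| ≤ z * Real.sqrt (SE n ω ^ 2 + τ / n)}).toReal
          = 1 - (P {ω | |I n ω - Istar| ≤ z * Real.sqrt (SE n ω ^ 2 + τ / n)}ᶜ).toReal := by
      intro n
      have h1 : P {ω | |I n ω - Istar| ≤ z * Real.sqrt (SE n ω ^ 2 + τ / n)}
          = 1 - P {ω | |I n ω - Istar| ≤ z * Real.sqrt (SE n ω ^ 2 + τ / n)}ᶜ := by
        have := prob_compl_eq_one_sub (μ := P) (hEmeas n).compl
        rwa [compl_compl] at this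
      rw [h1, ENNReal.toReal_sub_of_le prob_le_one ENNReal.one_ne_top, ENNReal.toReal_one]
    simp_rw [heq]
    have := hcomplR.const_sub 1
    simpa using this
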